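/- Let G = (V,E) be a finite simple graph, k ≥ 1 an integer, and v1, v2, v3 three distinct large-dense vertices of G such that v1v2 ∈ E, v2v3 ∈ E, and v1v3 ∉ E (i.e., {v1,v2,v3} induces a P3). Then every feasible solution X for (G,k) satisfies X ∩ {v1,v2,v3} ≠ ∅. -/

import Mathlib

open SimpleGraph

/-- The number of edges of `G` with both endpoints in the neighborhood of `v`. -/
noncomputable def rho {V : Type*} (G : SimpleGraph V) (v : V) : ℕ :=
  {e : Sym2 V | e ∈ G.edgeSet ∧ ∀ x ∈ e, G.Adj v x}.ncard

/-- `v` is large-sparse: `|N(v)| > 7k` and `ρ(v) ≤ |N(v)|(|N(v)|−1)/4`. -/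
def LargeSparse {V : Type*} (G : SimpleGraph V) (k : ℕ) (v : V) : Prop :=
  7 * k < (G.neighborSet v).ncard ∧
    4 * rho G v ≤ (G.neighborSet v).ncard * ((G.neighborSet v).ncard - 1)

/-- `v` is large-dense: `|N(v)| > 7k` and `ρ(v) > |N(v)|(|N(v)|−1)/4`. -/
def LargeDense {V : Type*} (G : SimpleGraph V) (k : ℕ) (v : V) : Prop :=
  7 * k < (G.neighborSet v).ncard ∧
    (G.neighborSet v).ncard * ((G.neighborSet v).ncard - 1) < 4 * rho G v

/-- The connected component `c` of `H` is a clique. -/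
def CompIsClique {W : Type*} (H : SimpleGraph W) (c : H.ConnectedComponent) : Prop :=
  H.IsClique c.supp

/-- The connected component `c` of `H` is a tree. -/
def CompIsTree {W : Type*} (H : SimpleGraph W) (c : H.ConnectedComponent) : Prop :=
  (H.induce c.supp).IsTree

/-- Every connected component of `H` is a clique or a tree. -/
def CliquesOrTrees {W : Type*} (H : SimpleGraph W) : Prop :=
  ∀ c : H.ConnectedComponent, CompIsClique H c ∨ CompIsTree H c

/-- `X` is a feasible solution for `(G, k)`: `|X| ≤ k` and every connected component of
`G − X` is a clique or a tree. -/
def IsFeasible {V : Type*} (G : SimpleGraph V) (k : ℕ) (X : Set V) : Prop :=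
  X.ncard ≤ k ∧ CliquesOrTrees (G.induce (Xᶜ : Set V))

private lemma ncard_prod_aux {α β : Type*} (s : Set α) (t : Set β) :
    (s ×ˢ t).ncard = s.ncard * t.ncard := by
  rw [← Nat.card_coe_set_eq, ← Nat.card_coe_set_eq, ← Nat.card_coe_set_eq,
    Nat.card_congr (Equiv.Set.prod s t), Nat.card_prod]

/-- A large-dense vertex has a triangle through it avoiding any set of size `≤ k`. -/
lemma exists_triangle_avoiding {V : Type*} [Fintype V] (G : SimpleGraph V) (k : ℕ)
    (hk : 1 ≤ k) (v : V) (hd : LargeDense G k v) (X : Set V) (hXk : X.ncard ≤ k) :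
    ∃ a b, G.Adj v a ∧ G.Adj v b ∧ G.Adj a b ∧ a ∉ X ∧ b ∉ X := by
  classical
  by_contra hcon
  push_neg at hcon
  set S : Set (Sym2 V) := {e : Sym2 V | e ∈ G.edgeSet ∧ ∀ x ∈ e, G.Adj v x} with hS
  set N := G.neighborSet v with hN
  have htouch : ∀ e ∈ S, ∃ x, x ∈ e ∧ x ∈ X := by
    intro e he
    induction e using Sym2.ind with
    | _ a b =>
      by_cases haX : a ∈ X
      · exact ⟨a, by simp, haX⟩
      · exact ⟨b, by simp,
          hcon a b (he.2 a (by simp)) (he.2 b (by simp)) he.1 haX⟩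
  set f : Sym2 V → V × V := fun e =>
    if h : ∃ x, x ∈ e ∧ x ∈ X then (h.choose, Sym2.Mem.other h.choose_spec.1) else (v, v)
    with hf
  have hfe : ∀ e ∈ S, Sym2.mk (f e).1 (f e).2 = e := by
    intro e he
    have h := htouch e he
    simp only [hf, dif_pos h]
    exact Sym2.other_spec h.choose_spec.1
  have hinj : Set.InjOn f S := by
    intro e he e' he' hee
    rw [← hfe e he, ← hfe e' he', hee]
  have hsub : f '' S ⊆ (X ∩ N) ×ˢ N := by
    rintro p ⟨e, he, rfl⟩
    have h := htouch e he
    simp only [hf, dif_pos h]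
    refine ⟨⟨h.choose_spec.2, ?_⟩, ?_⟩
    · exact he.2 _ h.choose_spec.1
    · exact he.2 _ (Sym2.other_mem h.choose_spec.1)
  have hrhoS : rho G v = S.ncard := by rw [rho, hS]
  have hcard : rho G v ≤ (X ∩ N).ncard * N.ncard := by
    rw [hrhoS]
    calc S.ncard = (f '' S).ncard := (Set.ncard_image_of_injOn hinj).symm
      _ ≤ ((X ∩ N) ×ˢ N).ncard := Set.ncard_le_ncard hsub (Set.toFinite _)
      _ = (X ∩ N).ncard * N.ncard := ncard_prod_aux _ _
  have h1 : (X ∩ N).ncard ≤ k :=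
    le_trans (Set.ncard_le_ncard Set.inter_subset_left X.toFinite) hXk
  have hrho : N.ncard * (N.ncard - 1) < 4 * rho G v := hd.2
  have hnk : 7 * k < N.ncard := hd.1
  have hkn : rho G v ≤ k * N.ncard :=
    le_trans hcard (Nat.mul_le_mul_right _ h1)
  have h4k : 4 * k ≤ N.ncard - 1 := by omega
  have hfinal : 4 * rho G v ≤ N.ncard * (N.ncard - 1) := by
    calc 4 * rho G v ≤ 4 * (k * N.ncard) := Nat.mul_le_mul_left 4 hkn
      _ = (4 * k) * N.ncard := by ring
      _ ≤ (N.ncard - 1) * N.ncard := Nat.mul_le_mul_right _ h4k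
      _ = N.ncard * (N.ncard - 1) := Nat.mul_comm _ _
  omega

/-- If a vertex lies in a triangle, its connected component is not a tree. -/
lemma comp_not_tree_of_triangle {W : Type*} (H : SimpleGraph W) (v a b : W)
    (hva : H.Adj v a) (hvb : H.Adj v b) (hab : H.Adj a b) :
    ¬ CompIsTree H (H.connectedComponentMk v) := by
  intro ht
  set c := H.connectedComponentMk v with hc
  have hv : v ∈ c.supp := by rw [ConnectedComponent.mem_supp_iff]
  have ha : a ∈ c.supp := by
    rw [ConnectedComponent.mem_supp_iff, hc]
    exact ConnectedComponent.sound hva.symm.reachable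
  have hb : b ∈ c.supp := by
    rw [ConnectedComponent.mem_supp_iff, hc]
    exact ConnectedComponent.sound hvb.symm.reachable
  set I := H.induce c.supp with hI
  have hva' : I.Adj ⟨v, hv⟩ ⟨a, ha⟩ := hva
  have hvb' : I.Adj ⟨v, hv⟩ ⟨b, hb⟩ := hvb
  have hab' : I.Adj ⟨a, ha⟩ ⟨b, hb⟩ := hab
  have hp2 : (Walk.cons hva' (Walk.cons hab' Walk.nil)).IsPath := by
    rw [Walk.isPath_def]
    simp only [Walk.support_cons, Walk.support_nil, List.nodup_cons, List.mem_cons,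
      List.mem_singleton, List.not_mem_nil, Subtype.mk.injEq]
    refine ⟨?_, ?_, ?_⟩
    · push_neg
      exact ⟨hva.ne, hvb.ne, trivial⟩
    · push_neg
      exact ⟨hab.ne, trivial⟩
    · simp
  have heq := ht.2.path_unique (Path.singleton hvb')
    ⟨Walk.cons hva' (Walk.cons hab' Walk.nil), hp2⟩
  have hl := congrArg (fun p : I.Path ⟨v, hv⟩ ⟨b, hb⟩ => p.1.length) heq
  simp [Path.singleton] at hl

/-- if three distinct large-dense vertices induce a `P₃`, then every feasible
solution for `(G,k)` intersects them. -/
theorem stmt_8 {V : Type*} [Fintype V] (G : SimpleGraph V) (k : ℕ) (hk : 1 ≤ k)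
    (v1 v2 v3 : V) (h12 : v1 ≠ v2) (h23 : v2 ≠ v3) (h13 : v1 ≠ v3)
    (hd1 : LargeDense G k v1) (hd2 : LargeDense G k v2) (hd3 : LargeDense G k v3)
    (ha12 : G.Adj v1 v2) (ha23 : G.Adj v2 v3) (hna13 : ¬ G.Adj v1 v3)
    (X : Set V) (hX : IsFeasible G k X) :
    X ∩ {v1, v2, v3} ≠ ∅ := by
  intro hempty
  have hnotin : ∀ w ∈ ({v1, v2, v3} : Set V), w ∉ X := by
    intro w hw hwX
    exact Set.eq_empty_iff_forall_notMem.mp hempty w ⟨hwX, hw⟩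
  have hv1 : v1 ∈ (Xᶜ : Set V) := hnotin v1 (by simp)
  have hv2 : v2 ∈ (Xᶜ : Set V) := hnotin v2 (by simp)
  have hv3 : v3 ∈ (Xᶜ : Set V) := hnotin v3 (by simp)
  set H := G.induce (Xᶜ : Set V) with hH
  set u1 : (Xᶜ : Set V) := ⟨v1, hv1⟩
  set u2 : (Xᶜ : Set V) := ⟨v2, hv2⟩
  set u3 : (Xᶜ : Set V) := ⟨v3, hv3⟩
  -- the component of u1 contains a triangle, hence is not a tree
  have htri : ∀ (v : V) (hv : v ∈ (Xᶜ : Set V)), LargeDense G k v →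
      ¬ CompIsTree H (H.connectedComponentMk ⟨v, hv⟩) := by
    intro v hv hd
    obtain ⟨a, b, hva, hvb, hab, haX, hbX⟩ :=
      exists_triangle_avoiding G k hk v hd X hX.1
    exact comp_not_tree_of_triangle H ⟨v, hv⟩ ⟨a, haX⟩ ⟨b, hbX⟩ hva hvb hab
  have hclique : CompIsClique H (H.connectedComponentMk u1) := by
    rcases hX.2 (H.connectedComponentMk u1) with h | h
    · exact h
    · exact absurd h (htri v1 hv1 hd1)
  have hu12 : H.Adj u1 u2 := ha12
  have hu23 : H.Adj u2 u3 := ha23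
  have hmem1 : u1 ∈ (H.connectedComponentMk u1).supp := by
    rw [ConnectedComponent.mem_supp_iff]
  have hmem3 : u3 ∈ (H.connectedComponentMk u1).supp := by
    rw [ConnectedComponent.mem_supp_iff]
    exact ConnectedComponent.sound ((hu23.symm.reachable).trans hu12.symm.reachable)
  have hne : u1 ≠ u3 := fun h => h13 (congrArg Subtype.val h)
  exact hna13 (hclique hmem1 hmem3 hne)
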